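/- Every Galkin quandle is self-dual: the dual of G(A, c₁, c₂) is G(A, c₂, c₁), and the map f(x,a) = (-x, a) is a quandle isomorphism from G(A, c₁, c₂) to its dual. -/

import Mathlib

/-- The function `μ` with `μ(0) = 2`, `μ(1) = μ(2) = -1`. -/
def galkinMu : ZMod 3 → ℤ := fun x => if x = 0 then 2 else -1

/-- The function `τ` with `τ(0) = 0`, `τ(1) = c₁`, `τ(2) = c₂`. -/
def galkinTau {A : Type*} [AddCommGroup A] (c₁ c₂ : A) : ZMod 3 → A :=
  fun x => if x = 1 then c₁ else if x = 2 then c₂ else 0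

/-- The Galkin quandle operation on `ZMod 3 × A` for the quandle `G(A, c₁, c₂)`. -/
def galkinOp {A : Type*} [AddCommGroup A] (c₁ c₂ : A) (p q : ZMod 3 × A) : ZMod 3 × A :=
  (2 * q.1 - p.1, -p.2 + galkinMu (p.1 - q.1) • q.2 + galkinTau c₁ c₂ (p.1 - q.1))

theorem stmt_15 {A : Type*} [AddCommGroup A] (c₁ c₂ : A) :
    (∀ p q : ZMod 3 × A, galkinOp c₁ c₂ (galkinOp c₂ c₁ p q) q = p) ∧
    Function.Bijective (fun p : ZMod 3 × A => ((-p.1, p.2) : ZMod 3 × A)) ∧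
    (∀ p q : ZMod 3 × A,
      ((-(galkinOp c₁ c₂ p q).1, (galkinOp c₁ c₂ p q).2) : ZMod 3 × A) =
        galkinOp c₂ c₁ (-p.1, p.2) (-q.1, q.2)) := by
  refine ⟨?_, ?_, ?_⟩
  · rintro ⟨x, a⟩ ⟨y, b⟩
    fin_cases x <;> fin_cases y <;>
      simp (config := { decide := true }) [galkinOp, galkinMu, galkinTau, Prod.ext_iff] <;>
      first | rfl | abel1 | (constructor <;> first | decide | exact sub_sub_cancel _ _ | abel)
  · constructor
    · rintro ⟨x, a⟩ ⟨y, b⟩ h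
      simp only [Prod.mk.injEq, neg_inj] at h
      exact Prod.ext h.1 h.2
    · rintro ⟨x, a⟩
      exact ⟨(-x, a), by simp⟩
  · rintro ⟨x, a⟩ ⟨y, b⟩
    fin_cases x <;> fin_cases y <;>
      simp (config := { decide := true }) [galkinOp, galkinMu, galkinTau, Prod.ext_iff] <;>
      first | rfl | abel | (constructor <;> first | decide | abel)
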